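/- Let μ be any probability measure on [−R,R] and let C ≥ 0. Then for every real y with |y| ≥ R(σ2+σ1)/(σ2−σ1) + √( ((σ2²−σ1²)/σ2² + 2C)/(1/σ1² − 1/σ2²) ), one has g(y) + log(σ2/σ1) − C > 0. Consequently, all zeros of the function y ↦ g(y) + log(σ2/σ1) − C lie in the interval [−L, L] with L = R(σ2+σ1)/(σ2−σ1) + √( ((σ2²−σ1²)/σ2² + 2C)/(1/σ1² − 1/σ2²) ). -/

import Mathlib

open MeasureTheory Real Filter

noncomputable section

/-- The `N(0,σ²)` density `φ_σ`. -/
def phiR (σ u : ℝ) : ℝ := (Real.sqrt (2 * π * σ ^ 2))⁻¹ * Real.exp (-u ^ 2 / (2 * σ ^ 2))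

/-- The Gaussian measure `N(x,σ²)` on `ℝ`. -/
def gauss1 (σ x : ℝ) : Measure ℝ :=
  volume.withDensity fun y => ENNReal.ofReal (phiR σ (y - x))

/-- Convolution `μ ∗ N(0,σ²)`. -/
def convGauss1 (μ : Measure ℝ) (σ : ℝ) : Measure ℝ :=
  Measure.map (fun p : ℝ × ℝ => p.1 + p.2) (μ.prod (gauss1 σ 0))

/-- Kullback–Leibler divergence (real-valued). -/
def KL {α : Type*} [MeasurableSpace α] (μ ν : Measure α) : ℝ :=
  ∫ y, Real.log (μ.rnDeriv ν y).toReal ∂μ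

/-- Density `f_i` of `μ ∗ N(0,σ²)`. -/
def outDens (σ : ℝ) (μ : Measure ℝ) (y : ℝ) : ℝ := ∫ x, phiR σ (y - x) ∂μ

/-- The function `g(y) = E[log f₂(y+N)] − log f₁(y)` with `N ∼ N(0, σ2²−σ1²)`. -/
def gFun (σ1 σ2 : ℝ) (μ : Measure ℝ) (y : ℝ) : ℝ :=
  (∫ t : ℝ, Real.log (outDens σ2 μ (y + t)) * phiR (Real.sqrt (σ2 ^ 2 - σ1 ^ 2)) t)
    - Real.log (outDens σ1 μ y)

/-- Secrecy-information of the input distribution `μ`. -/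
def secInfo1 (σ1 σ2 : ℝ) (μ : Measure ℝ) : ℝ :=
  ∫ x, (KL (gauss1 σ1 x) (convGauss1 μ σ1) - KL (gauss1 σ2 x) (convGauss1 μ σ2)) ∂μ

/-- Scalar secrecy-capacity under the amplitude constraint `|X| ≤ R`. -/
def Cs1 (σ1 σ2 R : ℝ) : ℝ :=
  sSup {r : ℝ | ∃ μ : Measure ℝ, IsProbabilityMeasure μ ∧
    (∀ᵐ x ∂μ, |x| ≤ R) ∧ secInfo1 σ1 σ2 μ = r}

/-- Topological support of a measure: points all of whose open neighbourhoods
have positive measure. -/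
def msupport {α : Type*} [TopologicalSpace α] [MeasurableSpace α] (μ : Measure α) : Set α :=
  {x | ∀ U : Set α, IsOpen U → x ∈ U → 0 < μ U}

/- ---------- auxiliary lemmas ---------- -/

section Aux

variable {σ u v b y R : ℝ} {μ : Measure ℝ}

lemma sqrt2pi_pos (hσ : 0 < σ) : 0 < Real.sqrt (2 * π * σ ^ 2) :=
  Real.sqrt_pos.2 (by positivity)

lemma phiR_pos (hσ : 0 < σ) : 0 < phiR σ u :=
  mul_pos (inv_pos.2 (sqrt2pi_pos hσ)) (Real.exp_pos _)

lemma phiR_mono (hσ : 0 < σ) (h : v ^ 2 ≤ u ^ 2) : phiR σ u ≤ phiR σ v := by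
  unfold phiR
  gcongr

lemma phiR_le_inv_sqrt (hσ : 0 < σ) : phiR σ u ≤ (Real.sqrt (2 * π * σ ^ 2))⁻¹ := by
  have h : phiR σ u ≤ phiR σ 0 := phiR_mono hσ (by simpa using sq_nonneg u)
  refine h.trans ?_
  unfold phiR
  simp

lemma log_phiR (hσ : 0 < σ) :
    Real.log (phiR σ u) = -Real.log (Real.sqrt (2 * π * σ ^ 2)) - u ^ 2 / (2 * σ ^ 2) := by
  unfold phiR
  rw [Real.log_mul (by positivity) (Real.exp_ne_zero _), Real.log_inv, Real.log_exp]
  ring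

lemma phiR_eq (σ u : ℝ) :
    phiR σ u = (Real.sqrt (2 * π * σ ^ 2))⁻¹ * Real.exp (-(2 * σ ^ 2)⁻¹ * u ^ 2) := by
  unfold phiR; rw [show -u ^ 2 / (2 * σ ^ 2) = -(2 * σ ^ 2)⁻¹ * u ^ 2 by ring]

lemma integrable_phiR (hσ : 0 < σ) : Integrable (fun u => phiR σ u) := by
  simp_rw [phiR_eq]
  exact (integrable_exp_neg_mul_sq (by positivity)).const_mul _

lemma integrable_sq_mul_exp (hb : (0:ℝ) < b) :
    Integrable (fun x : ℝ => x ^ 2 * Real.exp (-b * x ^ 2)) := by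
  have := integrable_rpow_mul_exp_neg_mul_sq hb (s := 2) (by norm_num)
  refine this.congr ?_
  filter_upwards with x
  rw [Real.rpow_two]

lemma integrable_sq_mul_phiR (hσ : 0 < σ) : Integrable (fun u => u ^ 2 * phiR σ u) := by
  refine ((integrable_sq_mul_exp (b := (2 * σ ^ 2)⁻¹) (by positivity)).const_mul
    (Real.sqrt (2 * π * σ ^ 2))⁻¹).congr ?_
  filter_upwards with x
  rw [phiR_eq]; ring

lemma integrable_abs_mul_phiR (hσ : 0 < σ) : Integrable (fun u => |u| * phiR σ u) := by
  have h := (integrable_mul_exp_neg_mul_sq (b := (2 * σ ^ 2)⁻¹) (by positivity)).abs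
  refine (h.const_mul (Real.sqrt (2 * π * σ ^ 2))⁻¹).congr ?_
  filter_upwards with x
  rw [phiR_eq, abs_mul, abs_of_nonneg (Real.exp_pos _).le]
  ring

lemma integrable_id_mul_phiR (hσ : 0 < σ) : Integrable (fun u => u * phiR σ u) := by
  refine ((integrable_mul_exp_neg_mul_sq (b := (2 * σ ^ 2)⁻¹) (by positivity)).const_mul
    (Real.sqrt (2 * π * σ ^ 2))⁻¹).congr ?_
  filter_upwards with x
  rw [phiR_eq]; ring

lemma sqrt_pi_div_inv (hσ : 0 < σ) :
    Real.sqrt (π / (2 * σ ^ 2)⁻¹) = Real.sqrt (2 * π * σ ^ 2) := by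
  rw [show π / (2 * σ ^ 2)⁻¹ = 2 * π * σ ^ 2 by field_simp]

lemma integral_phiR (hσ : 0 < σ) : ∫ u, phiR σ u = 1 := by
  simp_rw [phiR_eq]
  rw [MeasureTheory.integral_const_mul, integral_gaussian, sqrt_pi_div_inv hσ,
    inv_mul_cancel₀ (sqrt2pi_pos hσ).ne']

lemma integral_id_mul_phiR (hσ : 0 < σ) : ∫ u, u * phiR σ u = 0 := by
  have h : ∀ u : ℝ, (-u) * phiR σ (-u) = -(u * phiR σ u) := by
    intro u; rw [phiR_eq, phiR_eq, neg_sq]; ring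
  have h2 := MeasureTheory.integral_neg_eq_self (fun u : ℝ => u * phiR σ u) volume
  simp only [h, MeasureTheory.integral_neg] at h2
  linarith

lemma tendsto_mul_exp_zero (hb : 0 < b) :
    Tendsto (fun x : ℝ => x * Real.exp (-b * x ^ 2)) atTop (nhds 0) := by
  have h := (rpow_mul_exp_neg_mul_sq_isLittleO_exp_neg hb 1).isBigO
  have h2 : Tendsto (fun x : ℝ => Real.exp (-(1/2) * x)) atTop (nhds 0) := by
    have hcomp : Tendsto (fun x : ℝ => Real.exp (-(x / 2))) atTop (nhds 0) := by
      have := tendsto_exp_neg_atTop_nhds_zero.comp (tendsto_id.atTop_div_const two_pos)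
      simpa [Function.comp_def] using this
    refine hcomp.congr fun x => ?_
    ring_nf
  have h3 := h.trans_tendsto h2
  refine h3.congr' ?_
  filter_upwards [eventually_gt_atTop (0:ℝ)] with x hx
  rw [Real.rpow_one]

lemma integral_Ioi_mul_exp (hb : 0 < b) :
    ∫ x in Set.Ioi (0:ℝ), x * Real.exp (-b * x ^ 2) = (2 * b)⁻¹ := by
  have hderiv : ∀ x ∈ Set.Ici (0:ℝ),
      HasDerivAt (fun x : ℝ => -(2*b)⁻¹ * Real.exp (-b * x ^ 2))
        (x * Real.exp (-b * x ^ 2)) x := by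
    intro x _
    have h1 : HasDerivAt (fun x : ℝ => -b * x ^ 2) (-b * (2 * x)) x := by
      simpa using ((hasDerivAt_pow 2 x).const_mul (-b))
    have := (h1.exp).const_mul (-(2*b)⁻¹)
    refine this.congr_deriv ?_
    have : (2*b)⁻¹ * (2*b) = 1 := inv_mul_cancel₀ (by positivity)
    linear_combination (x * Real.exp (-b * x ^ 2)) * this
  have hexp : Tendsto (fun x : ℝ => Real.exp (-b * x ^ 2)) atTop (nhds 0) :=
    (exp_neg_mul_sq_isLittleO_exp_neg hb).isBigO.trans_tendsto tendsto_exp_neg_atTop_nhds_zero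
  have htend : Tendsto (fun x : ℝ => -(2*b)⁻¹ * Real.exp (-b * x ^ 2)) atTop (nhds 0) := by
    simpa using hexp.const_mul (-(2*b)⁻¹)
  have hint : IntegrableOn (fun x : ℝ => x * Real.exp (-b * x ^ 2)) (Set.Ioi 0) :=
    (integrable_mul_exp_neg_mul_sq hb).integrableOn
  have := MeasureTheory.integral_Ioi_of_hasDerivAt_of_tendsto'
    hderiv hint htend
  simpa using this

lemma integral_Ioi_sq_mul_exp (hb : 0 < b) :
    ∫ x in Set.Ioi (0:ℝ), x ^ 2 * Real.exp (-b * x ^ 2)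
      = (2*b)⁻¹ * (Real.sqrt (π / b) / 2) := by
  have hderiv : ∀ x ∈ Set.Ici (0:ℝ),
      HasDerivAt (fun x : ℝ => x * Real.exp (-b * x ^ 2))
        (Real.exp (-b * x ^ 2) - 2 * b * (x ^ 2 * Real.exp (-b * x ^ 2))) x := by
    intro x _
    have h1 : HasDerivAt (fun x : ℝ => -b * x ^ 2) (-b * (2 * x)) x := by
      simpa using ((hasDerivAt_pow 2 x).const_mul (-b))
    have := (hasDerivAt_id x).mul h1.exp
    refine this.congr_deriv ?_
    simp only [id_eq]
    ring
  have hint : IntegrableOn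
      (fun x : ℝ => Real.exp (-b * x ^ 2) - 2 * b * (x ^ 2 * Real.exp (-b * x ^ 2)))
      (Set.Ioi 0) := by
    refine MeasureTheory.Integrable.integrableOn ?_
    exact (integrable_exp_neg_mul_sq hb).sub ((integrable_sq_mul_exp hb).const_mul _)
  have := MeasureTheory.integral_Ioi_of_hasDerivAt_of_tendsto'
    hderiv hint (tendsto_mul_exp_zero hb)
  simp only [mul_zero, zero_mul, sub_zero] at this
  rw [MeasureTheory.integral_sub ((integrable_exp_neg_mul_sq hb).integrableOn)
      (((integrable_sq_mul_exp hb).const_mul _).integrableOn),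
    MeasureTheory.integral_const_mul, integral_gaussian_Ioi] at this
  have hb2 : (2*b) ≠ 0 := by positivity
  rw [inv_mul_eq_div, eq_div_iff hb2]
  linarith

lemma integral_sq_mul_phiR (hσ : 0 < σ) : ∫ u, u ^ 2 * phiR σ u = σ ^ 2 := by
  simp_rw [phiR_eq, mul_left_comm _ ((Real.sqrt (2 * π * σ ^ 2))⁻¹) _]
  rw [MeasureTheory.integral_const_mul]
  set b := (2 * σ ^ 2)⁻¹ with hbdef
  have hb : 0 < b := by positivity
  have habs : ∀ x : ℝ, (fun r : ℝ => r ^ 2 * Real.exp (-b * r ^ 2)) |x|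
      = x ^ 2 * Real.exp (-b * x ^ 2) := by
    intro x; simp [sq_abs]
  have h2 : ∫ x : ℝ, x ^ 2 * Real.exp (-b * x ^ 2)
      = 2 * ∫ x in Set.Ioi (0:ℝ), x ^ 2 * Real.exp (-b * x ^ 2) := by
    rw [← integral_comp_abs (f := fun r : ℝ => r ^ 2 * Real.exp (-b * r ^ 2))]
    simp_rw [habs]
  rw [h2, integral_Ioi_sq_mul_exp hb]
  have h3 : (2 * b)⁻¹ = σ ^ 2 := by rw [hbdef]; field_simp
  rw [sqrt_pi_div_inv hσ, h3]
  have h4 : (Real.sqrt (2 * π * σ ^ 2))⁻¹ * Real.sqrt (2 * π * σ ^ 2) = 1 :=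
    inv_mul_cancel₀ (sqrt2pi_pos hσ).ne'
  calc (Real.sqrt (2 * π * σ ^ 2))⁻¹ * (2 * (σ ^ 2 * (Real.sqrt (2 * π * σ ^ 2) / 2)))
      = ((Real.sqrt (2 * π * σ ^ 2))⁻¹ * Real.sqrt (2 * π * σ ^ 2)) * σ ^ 2 := by ring
    _ = σ ^ 2 := by rw [h4, one_mul]

lemma integral_abs_mul_phiR_le (hσ : 0 < σ) : ∫ u, |u| * phiR σ u ≤ σ := by
  simp_rw [phiR_eq, mul_left_comm _ ((Real.sqrt (2 * π * σ ^ 2))⁻¹) _]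
  rw [MeasureTheory.integral_const_mul]
  set b := (2 * σ ^ 2)⁻¹ with hbdef
  have hb : 0 < b := by positivity
  have h2 : ∫ x : ℝ, |x| * Real.exp (-b * x ^ 2)
      = 2 * ∫ x in Set.Ioi (0:ℝ), x * Real.exp (-b * x ^ 2) := by
    rw [← integral_comp_abs (f := fun r : ℝ => r * Real.exp (-b * r ^ 2))]
    congr 1; funext x; rw [sq_abs]
  rw [h2, integral_Ioi_mul_exp hb]
  have h3 : (2 * b)⁻¹ = σ ^ 2 := by rw [hbdef]; field_simp
  rw [h3]
  have h5 : 2 * σ ≤ Real.sqrt (2 * π * σ ^ 2) := by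
    have : (2 * σ) ^ 2 ≤ 2 * π * σ ^ 2 := by nlinarith [Real.pi_gt_three]
    calc 2 * σ = Real.sqrt ((2 * σ) ^ 2) := by rw [Real.sqrt_sq (by positivity)]
      _ ≤ Real.sqrt (2 * π * σ ^ 2) := Real.sqrt_le_sqrt this
  calc (Real.sqrt (2 * π * σ ^ 2))⁻¹ * (2 * σ ^ 2) ≤ (2 * σ)⁻¹ * (2 * σ ^ 2) := by
        gcongr
    _ = σ := by
        rw [inv_mul_eq_div, div_eq_iff (by positivity : (2 * σ : ℝ) ≠ 0)]
        ring

lemma continuous_phiR : Continuous (phiR σ) := by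
  unfold phiR
  fun_prop

lemma integrable_phiR_shift (hσ : 0 < σ) [IsFiniteMeasure μ] (y : ℝ) :
    Integrable (fun x => phiR σ (y - x)) μ := by
  refine Integrable.mono' (integrable_const ((Real.sqrt (2 * π * σ ^ 2))⁻¹)) ?_ ?_
  · exact (continuous_phiR.comp (continuous_const.sub continuous_id)).aestronglyMeasurable
  · filter_upwards with x
    rw [Real.norm_eq_abs, abs_of_pos (phiR_pos hσ)]
    exact phiR_le_inv_sqrt hσ

lemma outDens_le (hσ : 0 < σ) [IsProbabilityMeasure μ] (hsupp : ∀ᵐ x ∂μ, |x| ≤ R)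
    (hy : R ≤ |y|) : outDens σ μ y ≤ phiR σ (|y| - R) := by
  have h : ∀ᵐ x ∂μ, phiR σ (y - x) ≤ phiR σ (|y| - R) := by
    filter_upwards [hsupp] with x hx
    refine phiR_mono hσ ?_
    have h1 : |y| - R ≤ |y - x| := by
      have := abs_sub_abs_le_abs_sub y x
      linarith
    have h2 : 0 ≤ |y| - R := by linarith
    calc (|y| - R) ^ 2 ≤ |y - x| ^ 2 := by gcongr
      _ = (y - x) ^ 2 := sq_abs _
  calc outDens σ μ y ≤ ∫ _, phiR σ (|y| - R) ∂μ :=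
        integral_mono_ae (integrable_phiR_shift hσ y) (integrable_const _) h
    _ = phiR σ (|y| - R) := by simp

lemma outDens_ge (hσ : 0 < σ) [IsProbabilityMeasure μ] (hsupp : ∀ᵐ x ∂μ, |x| ≤ R)
    (y : ℝ) : phiR σ (|y| + R) ≤ outDens σ μ y := by
  have h : ∀ᵐ x ∂μ, phiR σ (|y| + R) ≤ phiR σ (y - x) := by
    filter_upwards [hsupp] with x hx
    refine phiR_mono hσ ?_
    have h1 : |y - x| ≤ |y| + R := (abs_sub y x).trans (by linarith)
    calc (y - x) ^ 2 = |y - x| ^ 2 := (sq_abs _).symm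
      _ ≤ (|y| + R) ^ 2 := by gcongr
  calc phiR σ (|y| + R) = ∫ _, phiR σ (|y| + R) ∂μ := by simp
    _ ≤ outDens σ μ y :=
        integral_mono_ae (integrable_const _) (integrable_phiR_shift hσ y) h

lemma outDens_pos (hσ : 0 < σ) [IsProbabilityMeasure μ] (hsupp : ∀ᵐ x ∂μ, |x| ≤ R)
    (y : ℝ) : 0 < outDens σ μ y :=
  (phiR_pos hσ).trans_le (outDens_ge hσ hsupp y)

lemma continuous_outDens (hσ : 0 < σ) [IsFiniteMeasure μ] :
    Continuous (outDens σ μ) := by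
  refine continuous_of_dominated (bound := fun _ => (Real.sqrt (2 * π * σ ^ 2))⁻¹) ?_ ?_ ?_ ?_
  · exact fun y =>
      (continuous_phiR.comp (continuous_const.sub continuous_id)).aestronglyMeasurable
  · intro y
    filter_upwards with x
    rw [Real.norm_eq_abs, abs_of_pos (phiR_pos hσ)]
    exact phiR_le_inv_sqrt hσ
  · exact integrable_const _
  · filter_upwards with x
    exact continuous_phiR.comp (continuous_id.sub continuous_const)

lemma log_outDens_le (hσ : 0 < σ) [IsProbabilityMeasure μ] (hsupp : ∀ᵐ x ∂μ, |x| ≤ R)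
    (hy : R ≤ |y|) :
    Real.log (outDens σ μ y)
      ≤ -Real.log (Real.sqrt (2 * π * σ ^ 2)) - (|y| - R) ^ 2 / (2 * σ ^ 2) := by
  have h := Real.log_le_log (outDens_pos hσ hsupp y) (outDens_le hσ hsupp hy)
  rwa [log_phiR hσ] at h

lemma log_outDens_ge (hσ : 0 < σ) [IsProbabilityMeasure μ] (hsupp : ∀ᵐ x ∂μ, |x| ≤ R)
    (y : ℝ) :
    -Real.log (Real.sqrt (2 * π * σ ^ 2)) - (|y| + R) ^ 2 / (2 * σ ^ 2)
      ≤ Real.log (outDens σ μ y) := by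
  have h := Real.log_le_log (phiR_pos hσ) (outDens_ge hσ hsupp y)
  rwa [log_phiR hσ] at h

lemma integrable_poly_mul_phiR (hσ : 0 < σ) (c1 c2 c3 c4 : ℝ) :
    Integrable (fun t => (c1 + c2 * t + c3 * t ^ 2 + c4 * |t|) * phiR σ t) := by
  have h := (((integrable_phiR hσ).const_mul c1).add
    ((integrable_id_mul_phiR hσ).const_mul c2)).add
    (((integrable_sq_mul_phiR hσ).const_mul c3).add
    ((integrable_abs_mul_phiR hσ).const_mul c4))
  refine h.congr ?_
  filter_upwards with t
  simp only [Pi.add_apply]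
  ring

lemma integral_poly_mul_phiR_ge (hσ : 0 < σ) (c1 c2 c3 c4 : ℝ) (hc4 : c4 ≤ 0) :
    c1 + c3 * σ ^ 2 + c4 * σ
      ≤ ∫ t, (c1 + c2 * t + c3 * t ^ 2 + c4 * |t|) * phiR σ t := by
  have e1 : Integrable (fun t : ℝ => c1 * phiR σ t) := (integrable_phiR hσ).const_mul c1
  have e2 : Integrable (fun t : ℝ => c2 * (t * phiR σ t)) :=
    (integrable_id_mul_phiR hσ).const_mul c2
  have e3 : Integrable (fun t : ℝ => c3 * (t ^ 2 * phiR σ t)) :=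
    (integrable_sq_mul_phiR hσ).const_mul c3
  have e4 : Integrable (fun t : ℝ => c4 * (|t| * phiR σ t)) :=
    (integrable_abs_mul_phiR hσ).const_mul c4
  have e12 : Integrable (fun t : ℝ => c1 * phiR σ t + c2 * (t * phiR σ t)) := e1.add e2
  have e34 : Integrable (fun t : ℝ => c3 * (t ^ 2 * phiR σ t) + c4 * (|t| * phiR σ t)) :=
    e3.add e4
  have heq : ∫ t, (c1 + c2 * t + c3 * t ^ 2 + c4 * |t|) * phiR σ t
      = ∫ t, (c1 * phiR σ t + c2 * (t * phiR σ t))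
          + (c3 * (t ^ 2 * phiR σ t) + c4 * (|t| * phiR σ t)) := by
    congr 1; funext t; ring
  rw [heq, MeasureTheory.integral_add e12 e34,
    MeasureTheory.integral_add e1 e2, MeasureTheory.integral_add e3 e4,
    MeasureTheory.integral_const_mul, MeasureTheory.integral_const_mul,
    MeasureTheory.integral_const_mul, MeasureTheory.integral_const_mul,
    integral_phiR hσ, integral_id_mul_phiR hσ, integral_sq_mul_phiR hσ]
  have h4 : c4 * σ ≤ c4 * ∫ t, |t| * phiR σ t :=
    mul_le_mul_of_nonpos_left (integral_abs_mul_phiR_le hσ) hc4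
  linarith

lemma final_algebra (σ1 σ2 R C a s τ : ℝ) (h1 : 0 < σ1) (h12 : σ1 < σ2) (hR : 0 < R)
    (hC : 0 ≤ C) (hτ : τ ^ 2 = σ2 ^ 2 - σ1 ^ 2) (hτpos : 0 < τ)
    (hs : s ^ 2 * (1 / σ1 ^ 2 - 1 / σ2 ^ 2) = (σ2 ^ 2 - σ1 ^ 2) / σ2 ^ 2 + 2 * C)
    (hs1 : σ1 ≤ s)
    (ha : R * (σ2 + σ1) / (σ2 - σ1) + s ≤ a) :
    C < (a - R) ^ 2 / (2 * σ1 ^ 2)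
      - (a ^ 2 + 2 * R * a + R ^ 2 + τ ^ 2 + 2 * R * τ) / (2 * σ2 ^ 2) := by
  have hσ2 : 0 < σ2 := h1.trans h12
  have hd : 0 < σ2 - σ1 := by linarith
  have hs0 : 0 < s := h1.trans_le hs1
  have ha' : R * (σ2 + σ1) ≤ (a - s) * (σ2 - σ1) := by
    have h := (div_le_iff₀ hd).mp (by linarith : R * (σ2 + σ1) / (σ2 - σ1) ≤ a - s)
    linarith
  have haR : R < a - s := by nlinarith [ha', mul_pos hR h1]
  have hs' : s ^ 2 * τ ^ 2 = σ1 ^ 2 * τ ^ 2 + 2 * C * σ1 ^ 2 * σ2 ^ 2 := by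
    have h := hs
    field_simp at h
    have h2 : (s ^ 2 * τ ^ 2) * σ2 ^ 2
        = (σ1 ^ 2 * τ ^ 2 + 2 * C * σ1 ^ 2 * σ2 ^ 2) * σ2 ^ 2 := by
      rw [hτ]; linear_combination σ2 ^ 2 * h
    exact mul_right_cancel₀ (by positivity) h2
  have hτσ2 : τ ≤ σ2 := by nlinarith [hτ, sq_nonneg σ1, mul_pos hτpos hσ2]
  have hA : 0 ≤ (a - R) * σ2 - (a + R) * σ1 - s * (σ2 - σ1) := by linarith [ha']
  have hB : 0 ≤ (a - R) * σ2 + (a + R) * σ1 := by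
    nlinarith [mul_pos (show (0:ℝ) < a - R by linarith) hσ2,
      mul_pos (show (0:ℝ) < a + R by nlinarith) h1]
  have hAB := mul_nonneg hA hB
  have hInner : 0 ≤ s * ((σ2 ^ 2 - σ1 ^ 2) * (a - s) - R * (σ1 + σ2) ^ 2) := by
    refine mul_nonneg hs0.le ?_
    have h3 := mul_le_mul_of_nonneg_right ha' (by linarith : (0:ℝ) ≤ σ1 + σ2)
    nlinarith [h3]
  have hss : 4 * R * σ1 * σ2 * σ1 ≤ 4 * R * σ1 * σ2 * s :=
    mul_le_mul_of_nonneg_left hs1 (by positivity)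
  have hτs : 2 * R * σ1 ^ 2 * τ ≤ 2 * R * σ1 ^ 2 * σ2 :=
    mul_le_mul_of_nonneg_left hτσ2 (by positivity)
  have hident : (a - R) ^ 2 * σ2 ^ 2
      - (a ^ 2 + 2 * R * a + R ^ 2 + τ ^ 2 + 2 * R * τ) * σ1 ^ 2
      - 2 * C * σ1 ^ 2 * σ2 ^ 2
      = ((a - R) * σ2 - (a + R) * σ1 - s * (σ2 - σ1)) * ((a - R) * σ2 + (a + R) * σ1)
        + s * ((σ2 ^ 2 - σ1 ^ 2) * (a - s) - R * (σ1 + σ2) ^ 2)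
        + 4 * R * σ1 * σ2 * s - 2 * R * τ * σ1 ^ 2 := by
    linear_combination (-(s ^ 2)) * hτ + hs'
  have hpos : (0:ℝ) < 2 * R * σ1 ^ 2 * σ2 := by positivity
  have hT : 0 < (a - R) ^ 2 * σ2 ^ 2
      - (a ^ 2 + 2 * R * a + R ^ 2 + τ ^ 2 + 2 * R * τ) * σ1 ^ 2
      - 2 * C * σ1 ^ 2 * σ2 ^ 2 := by
    rw [hident]
    linarith [hAB, hInner, hss, hτs, hpos]
  have hkey : (a - R) ^ 2 / (2 * σ1 ^ 2)
      - (a ^ 2 + 2 * R * a + R ^ 2 + τ ^ 2 + 2 * R * τ) / (2 * σ2 ^ 2) - C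
      = ((a - R) ^ 2 * σ2 ^ 2
      - (a ^ 2 + 2 * R * a + R ^ 2 + τ ^ 2 + 2 * R * τ) * σ1 ^ 2
      - 2 * C * σ1 ^ 2 * σ2 ^ 2) / (2 * σ1 ^ 2 * σ2 ^ 2) := by
    field_simp
  have hfin := div_pos hT (by positivity : (0:ℝ) < 2 * σ1 ^ 2 * σ2 ^ 2)
  rw [← hkey] at hfin
  linarith

end Aux

lemma outDens_le_inv_sqrt {σ : ℝ} {μ : Measure ℝ} (hσ : 0 < σ) [IsProbabilityMeasure μ]
    (y : ℝ) : outDens σ μ y ≤ (Real.sqrt (2 * π * σ ^ 2))⁻¹ := by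
  have h : ∀ᵐ x ∂μ, phiR σ (y - x) ≤ (Real.sqrt (2 * π * σ ^ 2))⁻¹ := by
    filter_upwards with x
    exact phiR_le_inv_sqrt hσ
  calc outDens σ μ y ≤ ∫ _, (Real.sqrt (2 * π * σ ^ 2))⁻¹ ∂μ :=
        integral_mono_ae (integrable_phiR_shift hσ y) (integrable_const _) h
    _ = (Real.sqrt (2 * π * σ ^ 2))⁻¹ := by simp

end

set_option maxHeartbeats 1000000 in
/-- For any probability measure `μ` on `[−R,R]` and any `C ≥ 0`,
`g(y) + log(σ2/σ1) − C > 0` whenever `|y| ≥ L`; consequently all zeros of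
`y ↦ g(y) + log(σ2/σ1) − C` lie in `[−L, L]`. -/
theorem gFun_positive_outside_interval
    (σ1 σ2 R : ℝ) (hσ1 : 0 < σ1) (hσ12 : σ1 < σ2) (hR : 0 < R)
    (μ : Measure ℝ) (hprob : IsProbabilityMeasure μ)
    (hsupp : ∀ᵐ x ∂μ, |x| ≤ R)
    (C : ℝ) (hC : 0 ≤ C) :
    (∀ y : ℝ,
      R * (σ2 + σ1) / (σ2 - σ1) +
          Real.sqrt (((σ2 ^ 2 - σ1 ^ 2) / σ2 ^ 2 + 2 * C) /
            (1 / σ1 ^ 2 - 1 / σ2 ^ 2)) ≤ |y| →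
      0 < gFun σ1 σ2 μ y + Real.log (σ2 / σ1) - C) ∧
    (∀ y : ℝ, gFun σ1 σ2 μ y + Real.log (σ2 / σ1) - C = 0 →
      y ∈ Set.Icc
        (-(R * (σ2 + σ1) / (σ2 - σ1) +
            Real.sqrt (((σ2 ^ 2 - σ1 ^ 2) / σ2 ^ 2 + 2 * C) /
              (1 / σ1 ^ 2 - 1 / σ2 ^ 2))))
        (R * (σ2 + σ1) / (σ2 - σ1) +
          Real.sqrt (((σ2 ^ 2 - σ1 ^ 2) / σ2 ^ 2 + 2 * C) /
            (1 / σ1 ^ 2 - 1 / σ2 ^ 2)))) := by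
  haveI := hprob
  have hσ2 : 0 < σ2 := hσ1.trans hσ12
  have key : ∀ y : ℝ,
      R * (σ2 + σ1) / (σ2 - σ1) +
          Real.sqrt (((σ2 ^ 2 - σ1 ^ 2) / σ2 ^ 2 + 2 * C) /
            (1 / σ1 ^ 2 - 1 / σ2 ^ 2)) ≤ |y| →
      0 < gFun σ1 σ2 μ y + Real.log (σ2 / σ1) - C := by
    intro y hy
    unfold gFun
    obtain ⟨τ, hτdef⟩ : ∃ x : ℝ, x = Real.sqrt (σ2 ^ 2 - σ1 ^ 2) := ⟨_, rfl⟩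
    rw [← hτdef]
    have hτ2 : τ ^ 2 = σ2 ^ 2 - σ1 ^ 2 := by
      rw [hτdef]; exact Real.sq_sqrt (by nlinarith)
    have hτpos : 0 < τ := by
      rw [hτdef]; exact Real.sqrt_pos.2 (by nlinarith)
    obtain ⟨s, hsdef⟩ : ∃ x : ℝ, x = Real.sqrt (((σ2 ^ 2 - σ1 ^ 2) / σ2 ^ 2 + 2 * C) /
      (1 / σ1 ^ 2 - 1 / σ2 ^ 2)) := ⟨_, rfl⟩
    rw [← hsdef] at hy
    have hD : 0 < 1 / σ1 ^ 2 - 1 / σ2 ^ 2 := by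
      have h1 : (0:ℝ) < σ1 ^ 2 := by positivity
      have h2 : σ1 ^ 2 < σ2 ^ 2 := by nlinarith
      have := one_div_lt_one_div_of_lt h1 h2
      linarith
    have hnum : 0 ≤ (σ2 ^ 2 - σ1 ^ 2) / σ2 ^ 2 + 2 * C := by
      have h0 : (0:ℝ) ≤ σ2 ^ 2 - σ1 ^ 2 := by nlinarith
      have := div_nonneg h0 (sq_nonneg σ2)
      linarith
    have hs2 : s ^ 2 = ((σ2 ^ 2 - σ1 ^ 2) / σ2 ^ 2 + 2 * C) /
        (1 / σ1 ^ 2 - 1 / σ2 ^ 2) := by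
      rw [hsdef]; exact Real.sq_sqrt (div_nonneg hnum hD.le)
    have hsEq : s ^ 2 * (1 / σ1 ^ 2 - 1 / σ2 ^ 2)
        = (σ2 ^ 2 - σ1 ^ 2) / σ2 ^ 2 + 2 * C := by
      rw [hs2, div_mul_cancel₀ _ hD.ne']
    have hs1 : σ1 ≤ s := by
      have harg : σ1 ^ 2 ≤ ((σ2 ^ 2 - σ1 ^ 2) / σ2 ^ 2 + 2 * C) /
          (1 / σ1 ^ 2 - 1 / σ2 ^ 2) := by
        rw [le_div_iff₀ hD]
        have hid : σ1 ^ 2 * (1 / σ1 ^ 2 - 1 / σ2 ^ 2) = (σ2 ^ 2 - σ1 ^ 2) / σ2 ^ 2 := by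
          field_simp
        rw [hid]
        linarith
      rw [hsdef]
      calc σ1 = Real.sqrt (σ1 ^ 2) := (Real.sqrt_sq hσ1.le).symm
        _ ≤ _ := Real.sqrt_le_sqrt harg
    have hs0 : 0 < s := hσ1.trans_le hs1
    have hyR : R ≤ |y| := by
      have hM : R < R * (σ2 + σ1) / (σ2 - σ1) := by
        rw [lt_div_iff₀ (by linarith : (0:ℝ) < σ2 - σ1)]
        nlinarith
      linarith
    have hlog1 := log_outDens_le hσ1 hsupp hyR
    obtain ⟨c1, hc1⟩ : ∃ x : ℝ, x = -Real.log (Real.sqrt (2 * π * σ2 ^ 2))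
      - (y ^ 2 + 2 * R * |y| + R ^ 2) / (2 * σ2 ^ 2) := ⟨_, rfl⟩
    obtain ⟨c2, hc2⟩ : ∃ x : ℝ, x = -y / σ2 ^ 2 := ⟨_, rfl⟩
    obtain ⟨c3, hc3⟩ : ∃ x : ℝ, x = -(1:ℝ) / (2 * σ2 ^ 2) := ⟨_, rfl⟩
    obtain ⟨c4, hc4⟩ : ∃ x : ℝ, x = -R / σ2 ^ 2 := ⟨_, rfl⟩
    have hexp : ∀ t : ℝ, c1 + c2 * t + c3 * t ^ 2 + c4 * |t|
        = -Real.log (Real.sqrt (2 * π * σ2 ^ 2))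
          - ((y + t) ^ 2 + 2 * R * (|y| + |t|) + R ^ 2) / (2 * σ2 ^ 2) := by
      intro t
      rw [hc1, hc2, hc3, hc4]
      ring
    have hsq : ∀ t : ℝ, (|y + t| + R) ^ 2
        ≤ (y + t) ^ 2 + 2 * R * (|y| + |t|) + R ^ 2 := by
      intro t
      have habs : |y + t| ≤ |y| + |t| := abs_add_le y t
      nlinarith [sq_abs (y + t), abs_nonneg (y + t)]
    have hdiv : ∀ t : ℝ, (|y + t| + R) ^ 2 / (2 * σ2 ^ 2)
        ≤ ((y + t) ^ 2 + 2 * R * (|y| + |t|) + R ^ 2) / (2 * σ2 ^ 2) := by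
      intro t
      apply div_le_div_of_nonneg_right (hsq t) (by positivity)
    have hptwise : ∀ t : ℝ, (c1 + c2 * t + c3 * t ^ 2 + c4 * |t|) * phiR τ t
        ≤ Real.log (outDens σ2 μ (y + t)) * phiR τ t := by
      intro t
      refine mul_le_mul_of_nonneg_right ?_ (phiR_pos hτpos).le
      have hlow := log_outDens_ge hσ2 hsupp (y + t)
      rw [hexp t]
      linarith [hlow, hdiv t]
    have hmeas : AEStronglyMeasurable
        (fun t : ℝ => Real.log (outDens σ2 μ (y + t)) * phiR τ t) volume := by
      apply Measurable.aestronglyMeasurable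
      exact (Real.measurable_log.comp ((continuous_outDens hσ2).measurable.comp
        (measurable_const.add measurable_id))).mul continuous_phiR.measurable
    have hup : ∀ z : ℝ, Real.log (outDens σ2 μ z)
        ≤ -Real.log (Real.sqrt (2 * π * σ2 ^ 2)) := by
      intro z
      have h := Real.log_le_log (outDens_pos hσ2 hsupp z) (outDens_le_inv_sqrt hσ2 z)
      rwa [Real.log_inv] at h
    have hid2 : ∀ t : ℝ, ((y + t) ^ 2 + 2 * R * (|y| + |t|) + R ^ 2) / (2 * σ2 ^ 2)
        = (y ^ 2 + 2 * R * |y| + R ^ 2) / (2 * σ2 ^ 2) + (y / σ2 ^ 2) * t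
          + (1 / (2 * σ2 ^ 2)) * t ^ 2 + (R / σ2 ^ 2) * |t| := by
      intro t
      ring
    have hbnd : ∀ t : ℝ, |Real.log (outDens σ2 μ (y + t))|
        ≤ (|Real.log (Real.sqrt (2 * π * σ2 ^ 2))|
            + (y ^ 2 + 2 * R * |y| + R ^ 2) / (2 * σ2 ^ 2))
          + (y / σ2 ^ 2) * t + (1 / (2 * σ2 ^ 2)) * t ^ 2 + (R / σ2 ^ 2) * |t| := by
      intro t
      have hlow := log_outDens_ge hσ2 hsupp (y + t)
      have hnn : 0 ≤ ((y + t) ^ 2 + 2 * R * (|y| + |t|) + R ^ 2) / (2 * σ2 ^ 2) := by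
        refine div_nonneg ?_ (by positivity)
        have h1 : 0 ≤ (y + t) ^ 2 := sq_nonneg _
        have h2 : 0 ≤ 2 * R * (|y| + |t|) :=
          mul_nonneg (by linarith) (by positivity)
        nlinarith [sq_nonneg R]
      rw [abs_le]
      constructor
      · have hna := le_abs_self (Real.log (Real.sqrt (2 * π * σ2 ^ 2)))
        linarith [hlow, hdiv t, hid2 t]
      · have hle := neg_le_abs (Real.log (Real.sqrt (2 * π * σ2 ^ 2)))
        linarith [hup (y + t), hle, hnn, hid2 t]
    have hbound : Integrable (fun t : ℝ => Real.log (outDens σ2 μ (y + t)) * phiR τ t) := by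
      refine Integrable.mono' (integrable_poly_mul_phiR hτpos
        (|Real.log (Real.sqrt (2 * π * σ2 ^ 2))|
          + (y ^ 2 + 2 * R * |y| + R ^ 2) / (2 * σ2 ^ 2))
        (y / σ2 ^ 2) (1 / (2 * σ2 ^ 2)) (R / σ2 ^ 2)) hmeas ?_
      filter_upwards with t
      rw [norm_mul, Real.norm_eq_abs, Real.norm_eq_abs, abs_of_pos (phiR_pos hτpos)]
      exact mul_le_mul_of_nonneg_right (by linarith [hbnd t]) (phiR_pos hτpos).le
    have hc4n : c4 ≤ 0 := by
      have h0 : 0 ≤ R / σ2 ^ 2 := by positivity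
      rw [hc4, neg_div]
      linarith
    have hI : c1 + c3 * τ ^ 2 + c4 * τ
        ≤ ∫ t, Real.log (outDens σ2 μ (y + t)) * phiR τ t :=
      le_trans (integral_poly_mul_phiR_ge hτpos c1 c2 c3 c4 hc4n)
        (integral_mono_ae (integrable_poly_mul_phiR hτpos c1 c2 c3 c4) hbound
          (Filter.Eventually.of_forall hptwise))
    have hcancel : Real.log (Real.sqrt (2 * π * σ1 ^ 2))
        - Real.log (Real.sqrt (2 * π * σ2 ^ 2)) + Real.log (σ2 / σ1) = 0 := by
      have e1 : Real.sqrt (2 * π * σ1 ^ 2) = Real.sqrt (2 * π) * σ1 := by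
        rw [Real.sqrt_mul (by positivity : (0:ℝ) ≤ 2 * π), Real.sqrt_sq hσ1.le]
      have e2 : Real.sqrt (2 * π * σ2 ^ 2) = Real.sqrt (2 * π) * σ2 := by
        rw [Real.sqrt_mul (by positivity : (0:ℝ) ≤ 2 * π), Real.sqrt_sq hσ2.le]
      have hs2π : Real.sqrt (2 * π) ≠ 0 := ne_of_gt (Real.sqrt_pos.2 (by positivity))
      rw [e1, e2, Real.log_mul hs2π hσ1.ne', Real.log_mul hs2π hσ2.ne',
        Real.log_div hσ2.ne' hσ1.ne']
      ring
    have halg := final_algebra σ1 σ2 R C |y| s τ hσ1 hσ12 hR hC hτ2 hτpos hsEq hs1 hy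
    have hy2 : y ^ 2 = |y| ^ 2 := (sq_abs y).symm
    rw [hc1, hc3, hc4, hy2] at hI
    have heq : -Real.log (Real.sqrt (2 * π * σ2 ^ 2))
        - (|y| ^ 2 + 2 * R * |y| + R ^ 2) / (2 * σ2 ^ 2)
        + -1 / (2 * σ2 ^ 2) * τ ^ 2 + -R / σ2 ^ 2 * τ
        = -Real.log (Real.sqrt (2 * π * σ2 ^ 2))
        - (|y| ^ 2 + 2 * R * |y| + R ^ 2 + τ ^ 2 + 2 * R * τ) / (2 * σ2 ^ 2) := by
      ring
    rw [heq] at hI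
    linarith [hI, hlog1, hcancel, halg]
  refine ⟨key, fun y hzero => ?_⟩
  by_contra hmem
  have hL : R * (σ2 + σ1) / (σ2 - σ1) +
      Real.sqrt (((σ2 ^ 2 - σ1 ^ 2) / σ2 ^ 2 + 2 * C) /
        (1 / σ1 ^ 2 - 1 / σ2 ^ 2)) ≤ |y| := by
    by_contra hL2
    push_neg at hL2
    exact hmem (Set.mem_Icc.mpr (abs_le.mp hL2.le))
  have hpos := key y hL
  rw [hzero] at hpos
  exact lt_irrefl 0 hpos
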